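/- Let C be a compact, metrizable, totally disconnected topological group, and let H be a closed subgroup of C. Then either H is finite, or H (with the subspace topology) is homeomorphic to the Cantor set, i.e., H is a nonempty compact metrizable totally disconnected perfect space. -/

import Mathlib

/-- A closed subgroup of a compact, metrizable, totally disconnected
topological group is either finite, or its underlying space is a Cantor set, i.e. a
nonempty, compact, metrizable, totally disconnected, perfect space. -/
theorem closed_subgroup_finite_or_cantor {C : Type*} [Group C] [TopologicalSpace C]
    [IsTopologicalGroup C] [CompactSpace C] [TopologicalSpace.MetrizableSpace C]
    [TotallyDisconnectedSpace C]
    (H : Subgroup C) (hH : IsClosed (H : Set C)) :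
    Finite H ∨ (Nonempty H ∧ CompactSpace H ∧ TopologicalSpace.MetrizableSpace H ∧
      TotallyDisconnectedSpace H ∧ PerfectSpace H) := by
  by_cases hfin : Finite H
  · exact Or.inl hfin
  · have hcomp : CompactSpace H := isCompact_iff_compactSpace.mp (hH.isCompact)
    refine Or.inr ⟨⟨1⟩, hcomp, Topology.IsEmbedding.subtypeVal.metrizableSpace, inferInstance, ?_⟩
    rw [perfectSpace_iff_forall_not_isolated]
    intro x
    by_contra h
    rw [Filter.not_neBot, ← isOpen_singleton_iff_punctured_nhds] at h
    -- translate: {1} is open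
    have h1 : IsOpen ({1} : Set H) := by
      have := (Homeomorph.mulLeft (x⁻¹ : H)).isOpenMap _ h
      simpa using this
    have : DiscreteTopology H := discreteTopology_of_isOpen_singleton_one h1
    exact hfin finite_of_compact_of_discrete
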